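/- Let M_b and M_c be two Metropolis-Hastings-type kernels with the same proposal kernel Q and acceptance probability functions b, c: G×G → [0,1], i.e., M_b(x,dz) = b(x,z)Q(x,dz) + δ_x(dz)(1 − ∫ b(x,y)Q(x,dy)). Suppose sup_x M_b V(x)/V(x) ≤ T for some T ≥ 1 and there exist functions η, ξ: G → [0,∞) and a set B ⊆ G with |b(x,y) − c(x,y)| ≤ 1_B(y)(η(x)+η(y)) b(x,y) ξ(x) for all x, y. Then sup_{x ∈ B} ‖M_b(x,·) − M_c(x,·)‖_V / V(x) ≤ 4T ‖η·1_B‖_∞ ‖ξ·1_B‖_∞. -/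
import Mathlib


open MeasureTheory ProbabilityTheory
open scoped ENNReal NNReal

/-- The `V`-weighted distance `‖μ − ν‖_V = sup_{|f| ≤ V} |μ(f) − ν(f)|`. -/
noncomputable def vDist {G : Type*} [MeasurableSpace G] (V : G → ℝ) (μ ν : Measure G) : ℝ :=
  ⨆ f : {f : G → ℝ // Measurable f ∧ ∀ x, |f x| ≤ V x},
    |(∫ x, (f : G → ℝ) x ∂μ) - ∫ x, (f : G → ℝ) x ∂ν|

/-- Metropolis–Hastings type transition measure with proposal `Q` and acceptance
probability `b`: `M_b(x,dz) = b(x,z) Q(x,dz) + δ_x(dz)(1 − ∫ b(x,y) Q(x,dy))`. -/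
noncomputable def MHker {G : Type*} [MeasurableSpace G]
    (Q : Kernel G G) (b : G → G → ℝ) (x : G) : Measure G :=
  (Q x).withDensity (fun z => ENNReal.ofReal (b x z)) +
    (1 - ∫⁻ y, ENNReal.ofReal (b x y) ∂(Q x)) • Measure.dirac x

lemma integrable_dirac'' {G : Type*} [MeasurableSpace G] {g : G → ℝ} (hg : Measurable g)
    (x : G) : Integrable g (Measure.dirac x) := by
  refine ⟨hg.aestronglyMeasurable, ?_⟩
  rw [HasFiniteIntegral, lintegral_dirac' _ (by exact hg.nnnorm.coe_nnreal_ennreal)]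
  exact ENNReal.coe_lt_top

lemma lint_le_one {G : Type*} [MeasurableSpace G] {μ : Measure G} [IsProbabilityMeasure μ]
    {β : G → ℝ} (hβ1 : ∀ z, β z ≤ 1) : ∫⁻ y, ENNReal.ofReal (β y) ∂μ ≤ 1 := by
  calc ∫⁻ y, ENNReal.ofReal (β y) ∂μ ≤ ∫⁻ _, 1 ∂μ :=
        lintegral_mono fun y => ENNReal.ofReal_le_one.2 (hβ1 y)
    _ = 1 := by simp

lemma integrable_mul_of_MH {G : Type*} [MeasurableSpace G] (Q : Kernel G G) [IsMarkovKernel Q]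
    (b : G → G → ℝ) (hb : ∀ x y, b x y ∈ Set.Icc (0:ℝ) 1)
    (hbmeas : Measurable (Function.uncurry b)) (x : G) (g : G → ℝ)
    (hgi : Integrable g (MHker Q b x)) :
    Integrable (fun z => g z * b x z) (Q x) := by
  have hβm : Measurable (fun z => b x z) := hbmeas.comp measurable_prodMk_left
  have hβnn : Measurable (fun z => (b x z).toNNReal) := hβm.real_toNNReal
  have hwd : (Q x).withDensity (fun z => ENNReal.ofReal (b x z))
      = (Q x).withDensity (fun z => ((b x z).toNNReal : ℝ≥0∞)) := rfl
  rw [MHker, integrable_add_measure] at hgi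
  have h1 := hgi.1
  rw [hwd, integrable_withDensity_iff_integrable_smul hβnn] at h1
  refine h1.congr (Filter.Eventually.of_forall fun z => ?_)
  simp [NNReal.smul_def, Real.coe_toNNReal _ (hb x z).1, mul_comm]

lemma integral_MH {G : Type*} [MeasurableSpace G] (Q : Kernel G G) [IsMarkovKernel Q]
    (b : G → G → ℝ) (hb : ∀ x y, b x y ∈ Set.Icc (0:ℝ) 1)
    (hbmeas : Measurable (Function.uncurry b)) (x : G) (g : G → ℝ) (hg : Measurable g)
    (hgi : Integrable (fun z => g z * b x z) (Q x)) :
    ∫ z, g z ∂(MHker Q b x)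
      = (∫ z, g z * b x z ∂(Q x))
        + (1 - (∫⁻ y, ENNReal.ofReal (b x y) ∂(Q x)).toReal) * g x := by
  have hβm : Measurable (fun z => b x z) := hbmeas.comp measurable_prodMk_left
  have hβnn : Measurable (fun z => (b x z).toNNReal) := hβm.real_toNNReal
  have hwd : (Q x).withDensity (fun z => ENNReal.ofReal (b x z))
      = (Q x).withDensity (fun z => ((b x z).toNNReal : ℝ≥0∞)) := rfl
  have hL : ∫⁻ y, ENNReal.ofReal (b x y) ∂(Q x) ≤ 1 := lint_le_one (fun z => (hb x z).2)
  have hLne : (1 : ℝ≥0∞) - ∫⁻ y, ENNReal.ofReal (b x y) ∂(Q x) ≠ ⊤ :=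
    (lt_of_le_of_lt tsub_le_self ENNReal.one_lt_top).ne
  have h1 : Integrable g ((Q x).withDensity fun z => ENNReal.ofReal (b x z)) := by
    rw [hwd, integrable_withDensity_iff_integrable_smul hβnn]
    refine hgi.congr (Filter.Eventually.of_forall fun z => ?_)
    simp [NNReal.smul_def, Real.coe_toNNReal _ (hb x z).1, mul_comm]
  have h2 : Integrable g ((1 - ∫⁻ y, ENNReal.ofReal (b x y) ∂(Q x)) • Measure.dirac x) :=
    (integrable_dirac'' hg x).smul_measure hLne
  rw [MHker, integral_add_measure h1 h2, hwd,
    integral_withDensity_eq_integral_smul hβnn g, integral_smul_measure,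
    integral_dirac' g x hg.stronglyMeasurable]
  congr 1
  · exact integral_congr_ae (Filter.Eventually.of_forall fun z => by
      simp [NNReal.smul_def, Real.coe_toNNReal _ (hb x z).1, mul_comm])
  · rw [ENNReal.toReal_sub_of_le hL ENNReal.one_ne_top, smul_eq_mul]
    simp

/-- comparison of two MH-type kernels with common proposal and acceptance
probabilities `b, c`; under `|b − c| ≤ 1_B(y)(η(x)+η(y)) b ξ(x)` and the Lyapunov bound
`M_b V ≤ T V`, one has `‖M_b(x,·) − M_c(x,·)‖_V ≤ 4T ‖η·1_B‖_∞ ‖ξ·1_B‖_∞ V(x)` on `B`. -/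
theorem mh_acceptance_perturbation {G : Type*} [MeasurableSpace G]
    (Q : Kernel G G) [IsMarkovKernel Q]
    (V : G → ℝ) (hVmeas : Measurable V) (hV : ∀ x, 1 ≤ V x)
    (b c : G → G → ℝ)
    (hb : ∀ x y, b x y ∈ Set.Icc (0 : ℝ) 1) (hc : ∀ x y, c x y ∈ Set.Icc (0 : ℝ) 1)
    (hbmeas : Measurable (Function.uncurry b)) (hcmeas : Measurable (Function.uncurry c))
    (T : ℝ) (hT : 1 ≤ T)
    (hVint : ∀ x, Integrable V (MHker Q b x))
    (hTbound : ∀ x, ∫ y, V y ∂(MHker Q b x) ≤ T * V x)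
    (η ξ : G → ℝ) (hη0 : ∀ x, 0 ≤ η x) (hξ0 : ∀ x, 0 ≤ ξ x)
    (B : Set G) (hB : MeasurableSet B)
    (Cη Cξ : ℝ) (hCη0 : 0 ≤ Cη) (hCξ0 : 0 ≤ Cξ)
    (hCη : ∀ y ∈ B, η y ≤ Cη) (hCξ : ∀ y ∈ B, ξ y ≤ Cξ)
    (hdiff : ∀ x y, |b x y - c x y|
      ≤ Set.indicator B (fun _ => (1 : ℝ)) y * (η x + η y) * b x y * ξ x) :
    ∀ x ∈ B, vDist V (MHker Q b x) (MHker Q c x) ≤ 4 * T * Cη * Cξ * V x := by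
  intro x hxB
  set D : ℝ := 2 * Cη * Cξ with hD
  have hD0 : 0 ≤ D := by positivity
  have hVx : (1:ℝ) ≤ V x := hV x
  -- pointwise bound |b - c| ≤ D * b
  have hkey : ∀ z, |b x z - c x z| ≤ D * b x z := by
    intro z
    by_cases hz : z ∈ B
    · have h := hdiff x z
      rw [Set.indicator_of_mem hz] at h
      have h1 := hCη x hxB; have h2 := hCη z hz; have h3 := hCξ x hxB
      have h4 := hη0 x; have h5 := hη0 z; have h6 := hξ0 x
      have hb0 := (hb x z).1
      simp only [one_mul] at h
      have s1 : (η x + η z) * b x z ≤ (Cη + Cη) * b x z :=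
        mul_le_mul_of_nonneg_right (by linarith) hb0
      have s2 : (η x + η z) * b x z * ξ x ≤ (Cη + Cη) * b x z * Cξ :=
        mul_le_mul s1 h3 h6 (by positivity)
      have s3 : (Cη + Cη) * b x z * Cξ = D * b x z := by rw [hD]; ring
      linarith
    · have h := hdiff x z
      rw [Set.indicator_of_notMem hz] at h
      simp only [zero_mul] at h
      have : |b x z - c x z| ≤ 0 := h
      exact this.trans (mul_nonneg hD0 (hb x z).1)
  -- integrability
  have hVb : Integrable (fun z => V z * b x z) (Q x) :=
    integrable_mul_of_MH Q b hb hbmeas x V (hVint x)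
  have hγm : Measurable (fun z => c x z) := hcmeas.comp measurable_prodMk_left
  have hβm : Measurable (fun z => b x z) := hbmeas.comp measurable_prodMk_left
  have hVc : Integrable (fun z => V z * c x z) (Q x) := by
    refine ((hVb.const_mul (1 + D)).mono'
      ((hVmeas.mul hγm).aestronglyMeasurable) (Filter.Eventually.of_forall fun z => ?_))
    have h1 := hkey z
    have hb0 := (hb x z).1; have hc0 := (hc x z).1
    have hV0 : (0:ℝ) ≤ V z := le_trans zero_le_one (hV z)
    have habs : c x z ≤ (1 + D) * b x z := by
      cases' abs_le.1 h1 with hl hr; linarith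
    rw [Real.norm_eq_abs, abs_of_nonneg (mul_nonneg hV0 hc0)]
    calc V z * c x z ≤ V z * ((1 + D) * b x z) :=
          mul_le_mul_of_nonneg_left habs hV0
      _ = (1 + D) * (V z * b x z) := by ring
  have hβint : Integrable (fun z => b x z) (Q x) := by
    refine (integrable_const (1:ℝ)).mono' hβm.aestronglyMeasurable
      (Filter.Eventually.of_forall fun z => ?_)
    rw [Real.norm_eq_abs, abs_of_nonneg (hb x z).1]
    simpa using (hb x z).2
  have hγint : Integrable (fun z => c x z) (Q x) := by
    refine (integrable_const (1:ℝ)).mono' hγm.aestronglyMeasurable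
      (Filter.Eventually.of_forall fun z => ?_)
    rw [Real.norm_eq_abs, abs_of_nonneg (hc x z).1]
    simpa using (hc x z).2
  -- lintegral real values
  have hLβ : (∫⁻ y, ENNReal.ofReal (b x y) ∂(Q x)).toReal = ∫ z, b x z ∂(Q x) := by
    rw [integral_eq_lintegral_of_nonneg_ae (Filter.Eventually.of_forall fun z => (hb x z).1)
      hβm.aestronglyMeasurable]
  have hLγ : (∫⁻ y, ENNReal.ofReal (c x y) ∂(Q x)).toReal = ∫ z, c x z ∂(Q x) := by
    rw [integral_eq_lintegral_of_nonneg_ae (Filter.Eventually.of_forall fun z => (hc x z).1)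
      hγm.aestronglyMeasurable]
  -- ∫ V b ≤ T V x
  have hVb_le : ∫ z, V z * b x z ∂(Q x) ≤ T * V x := by
    have hI := integral_MH Q b hb hbmeas x V hVmeas hVb
    have hLle : (∫⁻ y, ENNReal.ofReal (b x y) ∂(Q x)).toReal ≤ 1 := by
      have := lint_le_one (μ := Q x) (β := fun z => b x z) (fun z => (hb x z).2)
      simpa using ENNReal.toReal_mono ENNReal.one_ne_top this
    have hTb := hTbound x
    rw [hI] at hTb
    nlinarith [hVx]
  -- ∫ b ≤ 1 and ∫ |b - c| ≤ D
  have hβ1 : ∫ z, b x z ∂(Q x) ≤ 1 := by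
    calc ∫ z, b x z ∂(Q x) ≤ ∫ _, (1:ℝ) ∂(Q x) :=
          integral_mono hβint (integrable_const 1) (fun z => (hb x z).2)
      _ = 1 := by simp
  have hβ0 : 0 ≤ ∫ z, b x z ∂(Q x) :=
    integral_nonneg (fun z => (hb x z).1)
  -- the sup bound
  rw [vDist]
  have hbound0 : (0:ℝ) ≤ 4 * T * Cη * Cξ * V x := by
    have hX : (0:ℝ) ≤ Cη * Cξ * V x :=
      mul_nonneg (mul_nonneg hCη0 hCξ0) (by linarith)
    nlinarith [mul_nonneg (by linarith : (0:ℝ) ≤ T) hX]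
  refine Real.iSup_le (fun fi => ?_) hbound0
  obtain ⟨f, hfm, hfV⟩ := fi
  simp only
  have hfb : Integrable (fun z => f z * b x z) (Q x) := by
    refine hVb.mono' ((hfm.mul hβm).aestronglyMeasurable)
      (Filter.Eventually.of_forall fun z => ?_)
    have hb0 := (hb x z).1
    rw [Real.norm_eq_abs, abs_mul, abs_of_nonneg hb0]
    exact mul_le_mul_of_nonneg_right (hfV z) hb0
  have hfc : Integrable (fun z => f z * c x z) (Q x) := by
    refine hVc.mono' ((hfm.mul hγm).aestronglyMeasurable)
      (Filter.Eventually.of_forall fun z => ?_)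
    have hc0 := (hc x z).1
    rw [Real.norm_eq_abs, abs_mul, abs_of_nonneg hc0]
    exact mul_le_mul_of_nonneg_right (hfV z) hc0
  rw [integral_MH Q b hb hbmeas x f hfm hfb, integral_MH Q c hc hcmeas x f hfm hfc,
    hLβ, hLγ]
  have hsplit : ∫ z, f z * b x z ∂(Q x) + (1 - ∫ z, b x z ∂(Q x)) * f x
      - (∫ z, f z * c x z ∂(Q x) + (1 - ∫ z, c x z ∂(Q x)) * f x)
      = (∫ z, (f z * b x z - f z * c x z) ∂(Q x))
        + ((∫ z, c x z ∂(Q x)) - ∫ z, b x z ∂(Q x)) * f x := by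
    rw [integral_sub hfb hfc]; ring
  rw [hsplit]
  have habsint : ∀ g : G → ℝ, |∫ z, g z ∂(Q x)| ≤ ∫ z, |g z| ∂(Q x) := fun g => by
    simpa [Real.norm_eq_abs] using norm_integral_le_integral_norm (μ := Q x) g
  have hT1 : |∫ z, (f z * b x z - f z * c x z) ∂(Q x)| ≤ D * (T * V x) := by
    calc |∫ z, (f z * b x z - f z * c x z) ∂(Q x)|
        ≤ ∫ z, |f z * b x z - f z * c x z| ∂(Q x) := habsint _
      _ ≤ ∫ z, D * (V z * b x z) ∂(Q x) := by
          refine integral_mono (hfb.sub hfc).abs (hVb.const_mul D) (fun z => ?_)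
          have : f z * b x z - f z * c x z = f z * (b x z - c x z) := by ring
          rw [this, abs_mul]
          have hV0 : (0:ℝ) ≤ V z := le_trans zero_le_one (hV z)
          calc |f z| * |b x z - c x z| ≤ V z * (D * b x z) :=
                mul_le_mul (hfV z) (hkey z) (abs_nonneg _) hV0
            _ = D * (V z * b x z) := by ring
      _ = D * ∫ z, V z * b x z ∂(Q x) := integral_const_mul D _
      _ ≤ D * (T * V x) := mul_le_mul_of_nonneg_left hVb_le hD0
  have hT2 : |(∫ z, c x z ∂(Q x)) - ∫ z, b x z ∂(Q x)| ≤ D := by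
    calc |(∫ z, c x z ∂(Q x)) - ∫ z, b x z ∂(Q x)|
        = |∫ z, (c x z - b x z) ∂(Q x)| := by rw [integral_sub hγint hβint]
      _ ≤ ∫ z, |c x z - b x z| ∂(Q x) := habsint _
      _ ≤ ∫ z, D * b x z ∂(Q x) := by
          refine integral_mono (hγint.sub hβint).abs (hβint.const_mul D) (fun z => ?_)
          rw [abs_sub_comm]; exact hkey z
      _ = D * ∫ z, b x z ∂(Q x) := integral_const_mul D _
      _ ≤ D * 1 := mul_le_mul_of_nonneg_left hβ1 hD0
      _ = D := mul_one D
  calc |(∫ z, (f z * b x z - f z * c x z) ∂(Q x))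
        + ((∫ z, c x z ∂(Q x)) - ∫ z, b x z ∂(Q x)) * f x|
      ≤ |∫ z, (f z * b x z - f z * c x z) ∂(Q x)|
        + |((∫ z, c x z ∂(Q x)) - ∫ z, b x z ∂(Q x)) * f x| := abs_add_le _ _
    _ ≤ D * (T * V x) + D * V x := by
        refine add_le_add hT1 ?_
        rw [abs_mul]
        have := mul_le_mul hT2 (hfV x) (abs_nonneg _) hD0
        linarith
    _ ≤ 4 * T * Cη * Cξ * V x := by
        have hVx0 : (0:ℝ) ≤ V x := by linarith
        have hstep : D * V x ≤ D * (T * V x) := by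
          nlinarith [mul_nonneg (mul_nonneg hD0 (sub_nonneg.2 hT)) hVx0]
        have hfin : D * (T * V x) + D * (T * V x) = 4 * T * Cη * Cξ * V x := by
          rw [hD]; ring
        linarith
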